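/- Under the KKT stationarity relations λ_w − μ_{3,n} + μ_4 λ_w g_jam = 0 and λ_r − μ_{1,n} + μ_4 λ_r g_sum,n − μ_{5,n} s_n = 0 with λ_r, λ_w > 0, μ_{1,n}, μ_{3,n}, μ_{5,n} ≥ 0, s_n > 0, and g_jam < g_sum,n for all n, it is impossible that μ_{3,n} = 0 for any n; consequently by complementary slackness (μ_{3,n} x_jam,n = 0, x_jam,n ≥ 0), x_jam,n = 0 for all n. -/
import Mathlib

/-- Appendix A, (43)–(44): under the KKT stationarity relations with
`g_jam < g_sum,n`, no multiplier `μ_{3,n}` can vanish; hence by complementary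
slackness `x_jam,n = 0` for all `n`. -/
theorem kkt_contradiction (N : ℕ)
    (lamr lamw gjam : ℝ) (gsum s : Fin N → ℝ)
    (mu1 mu3 mu5 xjam : Fin N → ℝ) (mu4 : ℝ)
    (hlamr : 0 < lamr) (hlamw : 0 < lamw) (hgjam : 0 < gjam)
    (hgsum : ∀ n, gjam < gsum n) (hs : ∀ n, 0 < s n)
    (hmu1 : ∀ n, 0 ≤ mu1 n) (hmu3 : ∀ n, 0 ≤ mu3 n) (hmu5 : ∀ n, 0 ≤ mu5 n)
    (hxjam : ∀ n, 0 ≤ xjam n)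
    (hstat1 : ∀ n, lamw - mu3 n + mu4 * lamw * gjam = 0)
    (hstat2 : ∀ n, lamr - mu1 n + mu4 * lamr * gsum n - mu5 n * s n = 0)
    (hcs : ∀ n, mu3 n * xjam n = 0) :
    (∀ n, mu3 n ≠ 0) ∧ (∀ n, xjam n = 0) := by
  have key : ∀ n, mu3 n ≠ 0 := by
    intro n h
    have h1 := hstat1 n
    have h2 := hstat2 n
    rw [h] at h1
    -- mu4 * lamw * gjam = -lamw ⇒ mu4 * gjam = -1
    have hmu4 : mu4 * gjam = -1 := by
      have := mul_pos hlamw hgjam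
      field_simp at h1 ⊢
      nlinarith
    have hg := hgsum n
    have hsn := hs n
    have h2g : (lamr - mu1 n + mu4 * lamr * gsum n - mu5 n * s n) * gjam = 0 := by
      rw [h2]; ring
    nlinarith [mul_nonneg (hmu1 n) hgjam.le,
      mul_nonneg (mul_nonneg (hmu5 n) hsn.le) hgjam.le,
      mul_pos hlamr (sub_pos.mpr hg), h2g,
      show mu4 * gjam * (lamr * gsum n) = -(lamr * gsum n) by rw [hmu4]; ring]
  exact ⟨key, fun n => by
    have := hcs n
    rcases mul_eq_zero.mp this with h | h
    · exact absurd h (key n)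
    · exact h⟩
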